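/- Let α₁, α₂, α₃ be real numbers and let γ : ℝ⁶ → ℝ be γ(x) = Σ_{k=1}^{3} (α_k/2)(x_{2k−1}² + x_{2k}²). Then the equation Δγ(x) + 2‖∇γ(x)‖² = 0 holds for every x ∈ ℝ⁶ if and only if α₁ = α₂ = α₃ = 0. (This is the n = 3 case of the paper's Example 5.2: in complex dimension 3 the candidate conformal factor γ = Σ_k (α_k/2)(x_{2k−1}² + x_{2k}²) solves the equation Δγ + (n−1)|∇γ|² = 0 only in the trivial, Kähler, case.) -/

import Mathlib

open RealInnerProductSpace

noncomputable def diagCLM (c : Fin 6 → ℝ) :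
    EuclideanSpace ℝ (Fin 6) →L[ℝ] EuclideanSpace ℝ (Fin 6) :=
  LinearMap.toContinuousLinearMap
    { toFun := fun x => (WithLp.toLp 2 (fun i => c i * x i) : EuclideanSpace ℝ (Fin 6))
      map_add' := by intro x y; ext i; simp [mul_add]
      map_smul' := by intro m x; ext i; simp [smul_eq_mul]; ring }

@[simp] lemma diagCLM_apply (c : Fin 6 → ℝ) (x : EuclideanSpace ℝ (Fin 6)) (i : Fin 6) :
    diagCLM c x i = c i * x i := rfl

lemma inner_diag (c : Fin 6 → ℝ) (x y : EuclideanSpace ℝ (Fin 6)) :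
    ⟪diagCLM c x, y⟫ = ∑ i, c i * x i * y i := by
  simp [PiLp.inner_apply]
  exact Finset.sum_congr rfl fun i _ => by ring

lemma hasFDerivAt_quad (c : Fin 6 → ℝ) (x : EuclideanSpace ℝ (Fin 6)) :
    HasFDerivAt (fun y : EuclideanSpace ℝ (Fin 6) => (1/2 : ℝ) * ⟪diagCLM c y, y⟫)
      ((InnerProductSpace.toDual ℝ _) (diagCLM c x)) x := by
  have h := (((diagCLM c).hasFDerivAt (x := x)).inner ℝ (hasFDerivAt_id x)).const_mul (1/2 : ℝ)
  refine h.congr_fderiv ?_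
  ext v
  simp [fderivInnerCLM_apply, InnerProductSpace.toDual_apply_apply, inner_diag, real_inner_comm]
  rw [real_inner_comm (diagCLM c x) v, real_inner_comm (diagCLM c v) x, inner_diag, inner_diag]
  have h2 : ∑ i, c i * v i * x i = ∑ i, c i * x i * v i :=
    Finset.sum_congr rfl fun i _ => by ring
  rw [h2]; ring

lemma gradient_quad (c : Fin 6 → ℝ) (x : EuclideanSpace ℝ (Fin 6)) :
    gradient (fun y : EuclideanSpace ℝ (Fin 6) => (1/2 : ℝ) * ⟪diagCLM c y, y⟫) x
      = diagCLM c x := by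
  refine HasGradientAt.gradient ?_
  rw [hasGradientAt_iff_hasFDerivAt]
  exact hasFDerivAt_quad c x

lemma fderiv_quad (c : Fin 6 → ℝ) :
    fderiv ℝ (fun y : EuclideanSpace ℝ (Fin 6) => (1/2 : ℝ) * ⟪diagCLM c y, y⟫)
      = ⇑((innerSL ℝ).comp (diagCLM c)) := by
  funext y
  rw [(hasFDerivAt_quad c y).fderiv]
  ext v
  simp [InnerProductSpace.toDual_apply_apply]

/-- The Laplacian of `ψ` with respect to an orthonormal basis `b` of `E`:
`Δψ(x) = Σ_i D²ψ(x)(bᵢ, bᵢ)`. -/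
noncomputable def lap {E : Type*} [NormedAddCommGroup E] [InnerProductSpace ℝ E]
    {F : Type*} [NormedAddCommGroup F] [NormedSpace ℝ F]
    {ι : Type*} [Fintype ι] (b : OrthonormalBasis ι ℝ E) (ψ : E → F) (x : E) : F :=
  ∑ i, fderiv ℝ (fderiv ℝ ψ) x (b i) (b i)

lemma lap_quad (c : Fin 6 → ℝ) (x : EuclideanSpace ℝ (Fin 6)) :
    lap (EuclideanSpace.basisFun (Fin 6) ℝ)
      (fun y : EuclideanSpace ℝ (Fin 6) => (1/2 : ℝ) * ⟪diagCLM c y, y⟫) x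
      = ∑ i, c i := by
  rw [lap, fderiv_quad]
  refine Finset.sum_congr rfl fun i _ => ?_
  rw [ContinuousLinearMap.fderiv]
  simp [inner_diag, EuclideanSpace.basisFun_apply, EuclideanSpace.single_apply]

lemma norm_grad_quad (c : Fin 6 → ℝ) (x : EuclideanSpace ℝ (Fin 6)) :
    ‖gradient (fun y : EuclideanSpace ℝ (Fin 6) => (1/2 : ℝ) * ⟪diagCLM c y, y⟫) x‖ ^ 2
      = ∑ i, (c i * x i) ^ 2 := by
  rw [gradient_quad, ← real_inner_self_eq_norm_sq, inner_diag]
  exact Finset.sum_congr rfl fun i _ => by simp; ring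

/-- Example 5.2 of the paper, complex dimension n = 3: the candidate conformal
factor `γ(x) = Σ_{k=1}^{3} (α_k/2)(x_{2k-1}² + x_{2k}²)` on `ℝ⁶` satisfies
`Δγ + 2‖∇γ‖² = 0` everywhere iff `α₁ = α₂ = α₃ = 0`. -/
theorem example_C3_trivial
    (α₁ α₂ α₃ : ℝ)
    (γ : EuclideanSpace ℝ (Fin 6) → ℝ)
    (hγ : ∀ x : EuclideanSpace ℝ (Fin 6),
      γ x = α₁ / 2 * (x 0 ^ 2 + x 1 ^ 2) + α₂ / 2 * (x 2 ^ 2 + x 3 ^ 2)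
            + α₃ / 2 * (x 4 ^ 2 + x 5 ^ 2)) :
    (∀ x : EuclideanSpace ℝ (Fin 6),
        lap (EuclideanSpace.basisFun (Fin 6) ℝ) γ x + 2 * ‖gradient γ x‖ ^ 2 = 0)
      ↔ (α₁ = 0 ∧ α₂ = 0 ∧ α₃ = 0) := by
  set c : Fin 6 → ℝ := ![α₁, α₁, α₂, α₂, α₃, α₃] with hc
  have hγ' : γ = fun y : EuclideanSpace ℝ (Fin 6) => (1/2 : ℝ) * ⟪diagCLM c y, y⟫ := by
    funext y
    rw [hγ, inner_diag]
    simp [hc, Fin.sum_univ_six, Matrix.cons_val_succ]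
    ring
  rw [hγ']
  have key : ∀ x : EuclideanSpace ℝ (Fin 6),
      lap (EuclideanSpace.basisFun (Fin 6) ℝ)
        (fun y : EuclideanSpace ℝ (Fin 6) => (1/2 : ℝ) * ⟪diagCLM c y, y⟫) x
        + 2 * ‖gradient (fun y : EuclideanSpace ℝ (Fin 6) =>
            (1/2 : ℝ) * ⟪diagCLM c y, y⟫) x‖ ^ 2
      = (∑ i, c i) + 2 * ∑ i, (c i * x i) ^ 2 := fun x => by
    rw [lap_quad, norm_grad_quad]
  constructor
  · intro h
    have h0 := h 0
    have h1 := h (EuclideanSpace.single 0 1)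
    have h2 := h (EuclideanSpace.single 2 1)
    have h3 := h (EuclideanSpace.single 4 1)
    rw [key] at h0 h1 h2 h3
    simp [hc, Fin.sum_univ_six, Matrix.cons_val_succ, EuclideanSpace.single_apply] at h0 h1 h2 h3
    refine ⟨?_, ?_, ?_⟩ <;> nlinarith [sq_nonneg α₁, sq_nonneg α₂, sq_nonneg α₃]
  · rintro ⟨rfl, rfl, rfl⟩
    intro x
    rw [key]
    rw [show c = (fun _ => 0 : Fin 6 → ℝ) from List.ofFn_inj.mp rfl]
    simp
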